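/- Let ≿ be a niveloidal preference on 𝓕 with nonconstant affine utility index u : X → ℝ (with 0 in the interior of u(X)) representing it as in the minmax representation. Define B* = {b ∈ 𝒞 : max_{q∈Δ}(∫ u(f) dq − b(q)) ≥ u(x_f) for all f ∈ 𝓕}, where x_f is a certainty equivalent of f. Then: (a) B* is grounded; (b) for every f ∈ 𝓕, min_{b∈B*} max_{q∈Δ}(∫ u(f) dq − b(q)) = u(x_f), so B* satisfies the minmax representation of ≿; and (c) every grounded subset B ⊆ 𝒞 satisfying the minmax representation of ≿ with the same u is contained in B*; thus B* is the unique maximal such grounded subset. -/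

import Mathlib

open scoped Pointwise
open MeasureTheory

namespace Paper

variable {S V : Type*}

/-- An algebra of subsets of `S` (the events `Σ`). -/
structure IsSetAlg (𝓐 : Set (Set S)) : Prop where
  empty_mem : ∅ ∈ 𝓐
  compl_mem : ∀ A ∈ 𝓐, Aᶜ ∈ 𝓐
  union_mem : ∀ A ∈ 𝓐, ∀ B ∈ 𝓐, A ∪ B ∈ 𝓐

/-- `B₀(Σ)`: real-valued `Σ`-measurable simple functions. -/
def IsSimpleFn (𝓐 : Set (Set S)) (φ : S → ℝ) : Prop :=
  (Set.range φ).Finite ∧ ∀ t : ℝ, φ ⁻¹' {t} ∈ 𝓐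

open Classical in
/-- The integral of a simple function with respect to a finitely additive set function. -/
noncomputable def fint (p : Set S → ℝ) (φ : S → ℝ) : ℝ :=
  if h : (Set.range φ).Finite then ∑ t ∈ h.toFinset, t * p (φ ⁻¹' {t}) else 0

/-- `Δ`: the finitely additive probabilities on `Σ` (canonically extended by `0` off `Σ`). -/
def Δset (𝓐 : Set (Set S)) : Set (Set S → ℝ) :=
  {p | p Set.univ = 1 ∧ (∀ A ∈ 𝓐, 0 ≤ p A) ∧
    (∀ A ∈ 𝓐, ∀ B ∈ 𝓐, Disjoint A B → p (A ∪ B) = p A + p B) ∧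
    ∀ A : Set S, A ∉ 𝓐 → p A = 0}

/-- The weak* topology `σ(Δ, B₀(Σ))`, i.e. the topology induced by the evaluation maps
`p ↦ ∫ φ dp`, `φ ∈ B₀(Σ)`. -/
noncomputable def weakStar (𝓐 : Set (Set S)) : TopologicalSpace (Set S → ℝ) :=
  TopologicalSpace.induced
    (fun p => fun φ : {φ : S → ℝ // IsSimpleFn 𝓐 φ} => fint p φ.1)
    Pi.topologicalSpace

/-- `𝒞`: the weak*-lower semicontinuous convex functions `c : Δ → (-∞, ∞]`. -/
def Cscr (𝓐 : Set (Set S)) : Set ((Set S → ℝ) → EReal) :=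
  {c | (∀ p ∈ Δset 𝓐, ⊥ < c p) ∧
    (@LowerSemicontinuousOn (Set S → ℝ) EReal (weakStar 𝓐) _ c (Δset 𝓐)) ∧
    ∀ p ∈ Δset 𝓐, ∀ q ∈ Δset 𝓐, ∀ a b : ℝ, 0 ≤ a → 0 ≤ b → a + b = 1 →
      c (a • p + b • q) ≤ (a : EReal) * c p + (b : EReal) * c q}

/-- A subset `C ⊆ 𝒞` is grounded if `sup_{c ∈ C} min_{p ∈ Δ} c p = 0`. -/
def Grounded (𝓐 : Set (Set S)) (C : Set ((Set S → ℝ) → EReal)) : Prop :=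
  (⨆ c ∈ C, ⨅ p ∈ Δset 𝓐, c p) = 0

/-- `min_{p ∈ Δ} (∫ φ dp + c p)`. -/
noncomputable def minVal (𝓐 : Set (Set S)) (c : (Set S → ℝ) → EReal) (φ : S → ℝ) : EReal :=
  ⨅ p ∈ Δset 𝓐, ((fint p φ : EReal) + c p)

/-- `max_{q ∈ Δ} (∫ φ dq - b q)`. -/
noncomputable def maxVal (𝓐 : Set (Set S)) (b : (Set S → ℝ) → EReal) (φ : S → ℝ) : EReal :=
  ⨆ q ∈ Δset 𝓐, ((fint q φ : EReal) - b q)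

/-- `max_{c ∈ C} min_{p ∈ Δ} (∫ φ dp + c p)`. -/
noncomputable def maxminVal (𝓐 : Set (Set S)) (C : Set ((Set S → ℝ) → EReal))
    (φ : S → ℝ) : EReal :=
  ⨆ c ∈ C, minVal 𝓐 c φ

/-- `min_{b ∈ B} max_{q ∈ Δ} (∫ φ dq - b q)`. -/
noncomputable def minmaxVal (𝓐 : Set (Set S)) (B : Set ((Set S → ℝ) → EReal))
    (φ : S → ℝ) : EReal :=
  ⨅ b ∈ B, maxVal 𝓐 b φ

/-- `min_{p ∈ P} ∫ φ dp`. -/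
noncomputable def minPVal (P : Set (Set S → ℝ)) (φ : S → ℝ) : EReal :=
  ⨅ p ∈ P, (fint p φ : EReal)

/-- `max_{q ∈ Q} ∫ φ dq`. -/
noncomputable def maxQVal (Q : Set (Set S → ℝ)) (φ : S → ℝ) : EReal :=
  ⨆ q ∈ Q, (fint q φ : EReal)

/-- `max_{P ∈ Pfam} min_{p ∈ P} ∫ φ dp`. -/
noncomputable def maxminPVal (Pfam : Set (Set (Set S → ℝ))) (φ : S → ℝ) : EReal :=
  ⨆ P ∈ Pfam, minPVal P φ

/-- `min_{Q ∈ Qfam} max_{q ∈ Q} ∫ φ dq`. -/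
noncomputable def minmaxQVal (Qfam : Set (Set (Set S → ℝ))) (φ : S → ℝ) : EReal :=
  ⨅ Q ∈ Qfam, maxQVal Q φ

open Classical in
/-- The convex-analytic indicator `δ_P` of a set `P`. -/
noncomputable def ind (P : Set (Set S → ℝ)) : (Set S → ℝ) → EReal :=
  fun p => if p ∈ P then (0 : EReal) else ⊤

variable [AddCommGroup V] [Module ℝ V]

/-- `𝓕`: the simple acts, i.e. `Σ`-measurable maps `f : S → X` with finitely many values. -/
def Acts (𝓐 : Set (Set S)) (X : Set V) : Set (S → V) :=
  {f | (∀ s, f s ∈ X) ∧ (Set.range f).Finite ∧ ∀ v : V, f ⁻¹' {v} ∈ 𝓐}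

/-- The constant act with value `x`. -/
def constAct (x : V) : S → V := fun _ : S => x

/-- The mixture `α f + (1 - α) g` of two acts, defined statewise. -/
def mix (α : ℝ) (f g : S → V) : S → V := fun s => α • f s + (1 - α) • g s

/-- The statewise utility `u ∘ f` of an act. -/
def uAct (u : V → ℝ) (f : S → V) : S → ℝ := fun s => u (f s)

/-- `u : X → ℝ` is nonconstant and affine on `X`. -/
def IsNonconstAffine (X : Set V) (u : V → ℝ) : Prop :=
  (∀ x ∈ X, ∀ y ∈ X, ∀ t ∈ Set.Icc (0 : ℝ) 1,
      u (t • x + (1 - t) • y) = t * u x + (1 - t) * u y) ∧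
  ∃ x ∈ X, ∃ y ∈ X, u x ≠ u y

/-- A niveloidal preference: Axioms A1 (weak order), A2 (monotonicity), A3 (Archimedean)
and A4 (weak C-independence). -/
structure NiveloidalPref (𝓐 : Set (Set S)) (X : Set V)
    (R : (S → V) → (S → V) → Prop) : Prop where
  nontrivial : ∃ f ∈ Acts 𝓐 X, ∃ g ∈ Acts 𝓐 X, R f g ∧ ¬ R g f
  complete : ∀ f ∈ Acts 𝓐 X, ∀ g ∈ Acts 𝓐 X, R f g ∨ R g f
  transitive : ∀ f ∈ Acts 𝓐 X, ∀ g ∈ Acts 𝓐 X, ∀ h ∈ Acts 𝓐 X, R f g → R g h → R f h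
  monotone : ∀ f ∈ Acts 𝓐 X, ∀ g ∈ Acts 𝓐 X,
    (∀ s : S, R (constAct (f s)) (constAct (g s))) → R f g
  archimedean : ∀ f ∈ Acts 𝓐 X, ∀ g ∈ Acts 𝓐 X, ∀ h ∈ Acts 𝓐 X,
    (R f g ∧ ¬ R g f) → (R g h ∧ ¬ R h g) →
    ∃ α ∈ Set.Ioo (0 : ℝ) 1, ∃ β ∈ Set.Ioo (0 : ℝ) 1,
      (R (mix α f h) g ∧ ¬ R g (mix α f h)) ∧
      (R g (mix β f h) ∧ ¬ R (mix β f h) g)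
  weakCIndep : ∀ f ∈ Acts 𝓐 X, ∀ g ∈ Acts 𝓐 X, ∀ x ∈ X, ∀ y ∈ X,
    ∀ α ∈ Set.Ioo (0 : ℝ) 1,
    R (mix α f (constAct x)) (mix α g (constAct x)) →
    R (mix α f (constAct y)) (mix α g (constAct y))

/-- An invariant biseparable preference: Axioms A1 (weak order), A2 (monotonicity),
A3 (Archimedean) and A7 (C-independence). -/
structure IBPref (𝓐 : Set (Set S)) (X : Set V)
    (R : (S → V) → (S → V) → Prop) : Prop where
  nontrivial : ∃ f ∈ Acts 𝓐 X, ∃ g ∈ Acts 𝓐 X, R f g ∧ ¬ R g f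
  complete : ∀ f ∈ Acts 𝓐 X, ∀ g ∈ Acts 𝓐 X, R f g ∨ R g f
  transitive : ∀ f ∈ Acts 𝓐 X, ∀ g ∈ Acts 𝓐 X, ∀ h ∈ Acts 𝓐 X, R f g → R g h → R f h
  monotone : ∀ f ∈ Acts 𝓐 X, ∀ g ∈ Acts 𝓐 X,
    (∀ s : S, R (constAct (f s)) (constAct (g s))) → R f g
  archimedean : ∀ f ∈ Acts 𝓐 X, ∀ g ∈ Acts 𝓐 X, ∀ h ∈ Acts 𝓐 X,
    (R f g ∧ ¬ R g f) → (R g h ∧ ¬ R h g) →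
    ∃ α ∈ Set.Ioo (0 : ℝ) 1, ∃ β ∈ Set.Ioo (0 : ℝ) 1,
      (R (mix α f h) g ∧ ¬ R g (mix α f h)) ∧
      (R g (mix β f h) ∧ ¬ R (mix β f h) g)
  cIndep : ∀ f ∈ Acts 𝓐 X, ∀ g ∈ Acts 𝓐 X, ∀ x ∈ X, ∀ α ∈ Set.Ioo (0 : ℝ) 1,
    (R f g ↔ R (mix α f (constAct x)) (mix α g (constAct x)))

/-- Axiom A5 (uncertainty aversion). -/
def UncertaintyAverse (𝓐 : Set (Set S)) (X : Set V)
    (R : (S → V) → (S → V) → Prop) : Prop :=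
  ∀ f ∈ Acts 𝓐 X, ∀ g ∈ Acts 𝓐 X, ∀ α ∈ Set.Ioo (0 : ℝ) 1,
    R f g → R g f → R (mix α f g) f

/-- `xf` assigns to every act a certainty equivalent. -/
def IsCE (𝓐 : Set (Set S)) (X : Set V) (R : (S → V) → (S → V) → Prop)
    (xf : (S → V) → V) : Prop :=
  ∀ f ∈ Acts 𝓐 X, xf f ∈ X ∧ R f (constAct (xf f)) ∧ R (constAct (xf f)) f

/-- `C*`: the maximal candidate set of penalty functions. -/
def CstarOf (𝓐 : Set (Set S)) (X : Set V) (u : V → ℝ) (xf : (S → V) → V) :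
    Set ((Set S → ℝ) → EReal) :=
  {c | c ∈ Cscr 𝓐 ∧ ∀ f ∈ Acts 𝓐 X, minVal 𝓐 c (uAct u f) ≤ (u (xf f) : EReal)}

/-- `B*`: the maximal candidate set of reward functions. -/
def BstarOf (𝓐 : Set (Set S)) (X : Set V) (u : V → ℝ) (xf : (S → V) → V) :
    Set ((Set S → ℝ) → EReal) :=
  {b | b ∈ Cscr 𝓐 ∧ ∀ f ∈ Acts 𝓐 X, (u (xf f) : EReal) ≤ maxVal 𝓐 b (uAct u f)}

/-- `Pfam*`: the maximal family of prior sets (maxmin form). -/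
def PstarOf (𝓐 : Set (Set S)) (X : Set V) (u : V → ℝ) (xf : (S → V) → V) :
    Set (Set (Set S → ℝ)) :=
  {P | P ⊆ Δset 𝓐 ∧ P.Nonempty ∧ Convex ℝ P ∧ (@IsCompact _ (weakStar 𝓐) P) ∧
    ∀ f ∈ Acts 𝓐 X, minPVal P (uAct u f) ≤ (u (xf f) : EReal)}

/-- `Qfam*`: the maximal family of prior sets (minmax form). -/
def QstarOf (𝓐 : Set (Set S)) (X : Set V) (u : V → ℝ) (xf : (S → V) → V) :
    Set (Set (Set S → ℝ)) :=
  {Q | Q ⊆ Δset 𝓐 ∧ Q.Nonempty ∧ Convex ℝ Q ∧ (@IsCompact _ (weakStar 𝓐) Q) ∧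
    ∀ f ∈ Acts 𝓐 X, (u (xf f) : EReal) ≤ maxQVal Q (uAct u f)}

/-- `C` yields the maxmin representation of `R` with utility `u`. -/
def MaxminRep (𝓐 : Set (Set S)) (X : Set V) (R : (S → V) → (S → V) → Prop)
    (u : V → ℝ) (C : Set ((Set S → ℝ) → EReal)) : Prop :=
  ∀ f ∈ Acts 𝓐 X, ∀ g ∈ Acts 𝓐 X,
    (R f g ↔ maxminVal 𝓐 C (uAct u g) ≤ maxminVal 𝓐 C (uAct u f))

/-- All indicated maxima over `C` and minima over `Δ` are attained. -/
def MaxminAttained (𝓐 : Set (Set S)) (X : Set V) (u : V → ℝ)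
    (C : Set ((Set S → ℝ) → EReal)) : Prop :=
  ∀ f ∈ Acts 𝓐 X,
    (∀ c ∈ C, ∃ p ∈ Δset 𝓐,
      minVal 𝓐 c (uAct u f) = (fint p (uAct u f) : EReal) + c p) ∧
    ∃ c ∈ C, maxminVal 𝓐 C (uAct u f) = minVal 𝓐 c (uAct u f)

/-- `B` yields the minmax representation of `R` with utility `u`. -/
def MinmaxRep (𝓐 : Set (Set S)) (X : Set V) (R : (S → V) → (S → V) → Prop)
    (u : V → ℝ) (B : Set ((Set S → ℝ) → EReal)) : Prop :=
  ∀ f ∈ Acts 𝓐 X, ∀ g ∈ Acts 𝓐 X,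
    (R f g ↔ minmaxVal 𝓐 B (uAct u g) ≤ minmaxVal 𝓐 B (uAct u f))

/-- All indicated minima over `B` and maxima over `Δ` are attained. -/
def MinmaxAttained (𝓐 : Set (Set S)) (X : Set V) (u : V → ℝ)
    (B : Set ((Set S → ℝ) → EReal)) : Prop :=
  ∀ f ∈ Acts 𝓐 X,
    (∀ b ∈ B, ∃ q ∈ Δset 𝓐,
      maxVal 𝓐 b (uAct u f) = (fint q (uAct u f) : EReal) - b q) ∧
    ∃ b ∈ B, minmaxVal 𝓐 B (uAct u f) = maxVal 𝓐 b (uAct u f)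

/-- A family of nonempty, convex, weak*-compact subsets of `Δ`. -/
def IsPriorFamily (𝓐 : Set (Set S)) (Pfam : Set (Set (Set S → ℝ))) : Prop :=
  Pfam.Nonempty ∧ ∀ P ∈ Pfam,
    P ⊆ Δset 𝓐 ∧ P.Nonempty ∧ Convex ℝ P ∧ (@IsCompact _ (weakStar 𝓐) P)

/-- `Pfam` yields the maxmin representation of `R` with utility `u`. -/
def PRep (𝓐 : Set (Set S)) (X : Set V) (R : (S → V) → (S → V) → Prop)
    (u : V → ℝ) (Pfam : Set (Set (Set S → ℝ))) : Prop :=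
  ∀ f ∈ Acts 𝓐 X, ∀ g ∈ Acts 𝓐 X,
    (R f g ↔ maxminPVal Pfam (uAct u g) ≤ maxminPVal Pfam (uAct u f))

/-- All indicated maxima over `Pfam` and minima over `P` are attained. -/
def PAttained (𝓐 : Set (Set S)) (X : Set V) (u : V → ℝ)
    (Pfam : Set (Set (Set S → ℝ))) : Prop :=
  ∀ f ∈ Acts 𝓐 X,
    (∀ P ∈ Pfam, ∃ p ∈ P, minPVal P (uAct u f) = (fint p (uAct u f) : EReal)) ∧
    ∃ P ∈ Pfam, maxminPVal Pfam (uAct u f) = minPVal P (uAct u f)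

/-- `Qfam` yields the minmax representation of `R` with utility `u`. -/
def QRep (𝓐 : Set (Set S)) (X : Set V) (R : (S → V) → (S → V) → Prop)
    (u : V → ℝ) (Qfam : Set (Set (Set S → ℝ))) : Prop :=
  ∀ f ∈ Acts 𝓐 X, ∀ g ∈ Acts 𝓐 X,
    (R f g ↔ minmaxQVal Qfam (uAct u g) ≤ minmaxQVal Qfam (uAct u f))

/-- All indicated minima over `Qfam` and maxima over `Q` are attained. -/
def QAttained (𝓐 : Set (Set S)) (X : Set V) (u : V → ℝ)
    (Qfam : Set (Set (Set S → ℝ))) : Prop :=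
  ∀ f ∈ Acts 𝓐 X,
    (∀ Q ∈ Qfam, ∃ q ∈ Q, maxQVal Q (uAct u f) = (fint q (uAct u f) : EReal)) ∧
    ∃ Q ∈ Qfam, minmaxQVal Qfam (uAct u f) = maxQVal Q (uAct u f)

/-- `c₁ ≈_u c₂`: `c₁` and `c₂` induce the same variational functional on `B₀(Σ, u(X))`. -/
def ApproxEq (𝓐 : Set (Set S)) (X : Set V) (u : V → ℝ)
    (c₁ c₂ : (Set S → ℝ) → EReal) : Prop :=
  ∀ φ : S → ℝ, IsSimpleFn 𝓐 φ → (∀ s, φ s ∈ u '' X) →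
    minVal 𝓐 c₁ φ = minVal 𝓐 c₂ φ

/-- `R₁` is more ambiguity averse than `R₂`. -/
def MoreAmbiguityAverse (𝓐 : Set (Set S)) (X : Set V)
    (R₁ R₂ : (S → V) → (S → V) → Prop) : Prop :=
  ∀ f ∈ Acts 𝓐 X, ∀ x ∈ X, R₂ (constAct x) f → R₁ (constAct x) f

/-- `u₁` and `u₂` are positive affine transformations of each other on `X`. -/
def CardEquiv (X : Set V) (u₁ u₂ : V → ℝ) : Prop :=
  ∃ a b : ℝ, 0 < a ∧ ∀ x ∈ X, u₂ x = a * u₁ x + b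

/-- A capacity on `(S, Σ)`. -/
def IsCapacity (𝓐 : Set (Set S)) (π : Set S → ℝ) : Prop :=
  π ∅ = 0 ∧ π Set.univ = 1 ∧ ∀ A ∈ 𝓐, ∀ B ∈ 𝓐, A ⊆ B → π A ≤ π B

/-- The Choquet integral of a (simple) function against a capacity. -/
noncomputable def choquet (π : Set S → ℝ) (φ : S → ℝ) : ℝ :=
  (∫ t in Set.Ioi (0 : ℝ), π {s | t ≤ φ s}) +
    ∫ t in Set.Iio (0 : ℝ), (π {s | t ≤ φ s} - 1)

section Aux

variable {S : Type*} {𝓐 : Set (Set S)}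

lemma IsSetAlg.univ_mem (hA : IsSetAlg 𝓐) : (Set.univ : Set S) ∈ 𝓐 := by
  simpa using hA.compl_mem ∅ hA.empty_mem

lemma IsSetAlg.biUnion_mem (hA : IsSetAlg 𝓐) {ι : Type*} (t : Finset ι) (f : ι → Set S)
    (hf : ∀ i ∈ t, f i ∈ 𝓐) : (⋃ i ∈ t, f i) ∈ 𝓐 := by
  classical
  induction t using Finset.induction_on with
  | empty => simpa using hA.empty_mem
  | @insert a s hx ih =>
    rw [Finset.set_biUnion_insert]
    exact hA.union_mem _ (hf a (Finset.mem_insert_self a s)) _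
      (ih fun i hi => hf i (Finset.mem_insert_of_mem hi))

lemma Delta.empty_eq_zero {p : Set S → ℝ} (hp : p ∈ Δset 𝓐) (hA : IsSetAlg 𝓐) : p ∅ = 0 := by
  have := hp.2.2.1 ∅ hA.empty_mem ∅ hA.empty_mem (by simp)
  simp at this
  linarith

lemma Delta.le_one {p : Set S → ℝ} (hp : p ∈ Δset 𝓐) (hA : IsSetAlg 𝓐) {A : Set S}
    (hAm : A ∈ 𝓐) : p A ≤ 1 := by
  have hadd := hp.2.2.1 A hAm Aᶜ (hA.compl_mem A hAm) disjoint_compl_right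
  rw [Set.union_compl_self] at hadd
  have h1 : p Set.univ = 1 := hp.1
  have h2 : 0 ≤ p Aᶜ := hp.2.1 Aᶜ (hA.compl_mem A hAm)
  linarith [hadd ▸ h1]

lemma fint_eq_sum {p : Set S → ℝ} (hp0 : p ∅ = 0) {φ : S → ℝ} (hf : (Set.range φ).Finite)
    (T : Finset ℝ) (hT : Set.range φ ⊆ T) :
    fint p φ = ∑ t ∈ T, t * p (φ ⁻¹' {t}) := by
  classical
  rw [fint, dif_pos hf]
  refine Finset.sum_subset (fun t ht => hT (hf.mem_toFinset.mp ht)) (fun t ht hnt => ?_)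
  have : φ ⁻¹' {t} = ∅ := by
    ext s; simp only [Set.mem_preimage, Set.mem_singleton_iff, Set.mem_empty_iff_false,
      iff_false]
    intro h; exact hnt (hf.mem_toFinset.mpr ⟨s, h⟩)
  rw [this, hp0, mul_zero]

lemma fint_const [Nonempty S] {p : Set S → ℝ} (hp : p ∈ Δset 𝓐) (hA : IsSetAlg 𝓐) (c : ℝ) :
    fint p (fun _ => c) = c := by
  classical
  rw [fint_eq_sum (Delta.empty_eq_zero hp hA) (by simp) {c}
    (by simp [Set.range_const])]
  have : (fun _ : S => c) ⁻¹' {c} = Set.univ := by ext s; simp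
  simp [this, hp.1]

/-- The indicator function of a set. -/
noncomputable def chi (A : Set S) : S → ℝ := A.indicator 1

lemma chi_preim_one (A : Set S) : chi A ⁻¹' {1} = A := by
  ext s
  simp only [chi, Set.mem_preimage, Set.mem_singleton_iff]
  by_cases h : s ∈ A <;> simp [Set.indicator_of_mem, Set.indicator_of_notMem, h]

lemma chi_preim_zero (A : Set S) : chi A ⁻¹' {0} = Aᶜ := by
  ext s
  simp only [chi, Set.mem_preimage, Set.mem_singleton_iff, Set.mem_compl_iff]
  by_cases h : s ∈ A <;> simp [Set.indicator_of_mem, Set.indicator_of_notMem, h]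

lemma chi_preim_other {t : ℝ} (ht0 : t ≠ 0) (ht1 : t ≠ 1) (A : Set S) : chi A ⁻¹' {t} = ∅ := by
  ext s
  simp only [chi, Set.mem_preimage, Set.mem_singleton_iff, Set.mem_empty_iff_false, iff_false]
  by_cases h : s ∈ A <;> simp [Set.indicator_of_mem, Set.indicator_of_notMem, h,
    Ne.symm ht0, Ne.symm ht1]

lemma chi_range_subset (A : Set S) : Set.range (chi A) ⊆ {0, 1} := by
  rintro t ⟨s, rfl⟩
  by_cases h : s ∈ A <;> simp [chi, Set.indicator_of_mem, Set.indicator_of_notMem, h]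

lemma chi_simple (hA : IsSetAlg 𝓐) {A : Set S} (hAm : A ∈ 𝓐) : IsSimpleFn 𝓐 (chi A) := by
  refine ⟨Set.Finite.subset (by simp) (chi_range_subset A), fun t => ?_⟩
  by_cases ht1 : t = 1
  · rw [ht1, chi_preim_one]; exact hAm
  by_cases ht0 : t = 0
  · rw [ht0, chi_preim_zero]; exact hA.compl_mem A hAm
  · rw [chi_preim_other ht0 ht1]; exact hA.empty_mem

lemma fint_chi {p : Set S → ℝ} (hp0 : p ∅ = 0) (A : Set S) : fint p (chi A) = p A := by
  classical
  rw [fint_eq_sum hp0 (Set.Finite.subset (by simp) (chi_range_subset A)) {0, 1}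
    (by simpa using chi_range_subset A)]
  rw [Finset.sum_pair (by norm_num : (0:ℝ) ≠ 1)]
  simp [chi_preim_one]

end Aux
section Aux2

variable {S : Type*} {𝓐 : Set (Set S)}

open Classical in
noncomputable def diracP (𝓐 : Set (Set S)) (s₀ : S) : Set S → ℝ :=
  fun A => if s₀ ∈ A ∧ A ∈ 𝓐 then 1 else 0

lemma diracP_mem (hA : IsSetAlg 𝓐) (s₀ : S) : diracP 𝓐 s₀ ∈ Δset 𝓐 := by
  classical
  refine ⟨?_, ?_, ?_, ?_⟩
  · simp [diracP, hA.univ_mem]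
  · intro A _; unfold diracP; split <;> norm_num
  · intro A hAm B hBm hd
    have hdAB : s₀ ∈ A → s₀ ∈ B → False := fun h1 h2 =>
      (Set.disjoint_left.mp hd h1) h2
    by_cases h1 : s₀ ∈ A
    · have h2 : s₀ ∉ B := fun h => hdAB h1 h
      simp [diracP, h1, h2, hA.union_mem A hAm B hBm, hAm, hBm]
    · by_cases h2 : s₀ ∈ B
      · simp [diracP, h1, h2, hA.union_mem A hAm B hBm, hAm, hBm]
      · have : s₀ ∉ A ∪ B := by simp [h1, h2]
        simp [diracP, h1, h2, this]
  · intro A hAm; simp [diracP, hAm]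

lemma Δset_nonempty [Nonempty S] (hA : IsSetAlg 𝓐) : (Δset 𝓐).Nonempty :=
  ⟨diracP 𝓐 (Classical.arbitrary S), diracP_mem hA _⟩

variable {V : Type*} [AddCommGroup V] [Module ℝ V]

lemma constAct_mem (hA : IsSetAlg 𝓐) {X : Set V} {x : V} (hx : x ∈ X) :
    constAct x ∈ Acts 𝓐 X := by
  refine ⟨fun _ => hx, Set.finite_range_const, fun v => ?_⟩
  by_cases h : x = v
  · have : (constAct x : S → V) ⁻¹' {v} = Set.univ := by ext s; simp [constAct, h]
    rw [this]; exact hA.univ_mem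
  · have : (constAct x : S → V) ⁻¹' {v} = ∅ := by ext s; simp [constAct, h]
    rw [this]; exact hA.empty_mem

lemma uAct_const (u : V → ℝ) (x : V) : uAct u (constAct x : S → V) = fun _ : S => u x := rfl

lemma uAct_simple (hA : IsSetAlg 𝓐) {X : Set V} {u : V → ℝ} {f : S → V}
    (hf : f ∈ Acts 𝓐 X) : IsSimpleFn 𝓐 (uAct u f) := by
  classical
  obtain ⟨-, hfin, hmeas⟩ := hf
  constructor
  · have : Set.range (uAct u f) ⊆ u '' Set.range f := by
      rintro t ⟨s, rfl⟩; exact ⟨f s, ⟨s, rfl⟩, rfl⟩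
    exact (hfin.image u).subset this
  · intro t
    have : uAct u f ⁻¹' {t} = ⋃ v ∈ hfin.toFinset.filter (fun v => u v = t), f ⁻¹' {v} := by
      ext s
      simp only [Set.mem_preimage, Set.mem_singleton_iff, Set.mem_iUnion, Finset.mem_filter,
        Set.Finite.mem_toFinset]
      constructor
      · intro h; exact ⟨f s, ⟨⟨⟨s, rfl⟩, h⟩, rfl⟩⟩
      · rintro ⟨v, ⟨-, hv⟩, rfl⟩; exact hv
    rw [this]
    exact hA.biUnion_mem _ _ (fun v _ => hmeas v)

end Aux2
section Aux3

variable {α : Type*}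

lemma ereal_biSup_const_sub (s : Set α) (c : ℝ) (f : α → EReal) :
    (⨆ q ∈ s, ((c : EReal) - f q)) = (c : EReal) - ⨅ q ∈ s, f q := by
  refine le_antisymm (iSup₂_le fun q hq => EReal.sub_le_sub le_rfl (iInf₂_le q hq)) ?_
  by_contra h
  push_neg at h
  obtain ⟨w, hw1, hw2⟩ := EReal.exists_between_coe_real h
  have key : ∀ q ∈ s, ((c - w : ℝ) : EReal) ≤ f q := by
    intro q hq
    have h1 : (c : EReal) - f q < w := lt_of_le_of_lt (le_iSup₂ (f := fun q _ => (c:EReal) - f q) q hq) hw1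
    revert h1
    induction f q using EReal.rec with
    | bot => intro h1; rw [EReal.coe_sub_bot] at h1; exact absurd h1 (by simp)
    | coe y =>
      intro h1
      rw [← EReal.coe_sub, EReal.coe_lt_coe_iff] at h1
      rw [EReal.coe_le_coe_iff]; linarith
    | top => intro _; exact le_top
  have hm : ((c - w : ℝ) : EReal) ≤ ⨅ q ∈ s, f q := le_iInf₂ key
  have : (c : EReal) - (⨅ q ∈ s, f q) ≤ (c : EReal) - ((c - w : ℝ) : EReal) :=
    EReal.sub_le_sub le_rfl hm
  rw [← EReal.coe_sub] at this
  have hcw : c - (c - w) = w := by ring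
  rw [hcw] at this
  exact absurd (lt_of_lt_of_le hw2 this) (lt_irrefl _)

lemma ereal_biInf_const_sub (s : Set α) (c : ℝ) (f : α → EReal) :
    (⨅ q ∈ s, ((c : EReal) - f q)) = (c : EReal) - ⨆ q ∈ s, f q := by
  refine le_antisymm ?_ (le_iInf₂ fun q hq => EReal.sub_le_sub le_rfl (le_iSup₂ (f := fun q _ => f q) q hq))
  by_contra h
  push_neg at h
  obtain ⟨w, hw1, hw2⟩ := EReal.exists_between_coe_real h
  have key : ∀ q ∈ s, f q ≤ ((c - w : ℝ) : EReal) := by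
    intro q hq
    have h1 : (w : EReal) < (c : EReal) - f q :=
      lt_of_lt_of_le hw2 (iInf₂_le (f := fun q _ => (c:EReal) - f q) q hq)
    revert h1
    induction f q using EReal.rec with
    | bot => intro _; exact bot_le
    | coe y =>
      intro h1
      rw [← EReal.coe_sub, EReal.coe_lt_coe_iff] at h1
      rw [EReal.coe_le_coe_iff]; linarith
    | top =>
      intro h1
      rw [EReal.sub_top] at h1
      exact absurd h1 (by simp)
  have hm : (⨆ q ∈ s, f q) ≤ ((c - w : ℝ) : EReal) := iSup₂_le key
  have : (c : EReal) - ((c - w : ℝ) : EReal) ≤ (c : EReal) - ⨆ q ∈ s, f q :=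
    EReal.sub_le_sub le_rfl hm
  rw [← EReal.coe_sub] at this
  have hcw : c - (c - w) = w := by ring
  rw [hcw] at this
  exact absurd (lt_of_le_of_lt this hw1) (lt_irrefl _)

lemma ereal_le_sub_self {c : ℝ} {m : EReal} (h : (c : EReal) ≤ (c : EReal) - m) : m ≤ 0 := by
  induction m using EReal.rec with
  | bot => exact bot_le
  | coe y =>
    rw [← EReal.coe_sub, EReal.coe_le_coe_iff] at h
    rw [← EReal.coe_zero, EReal.coe_le_coe_iff]; linarith
  | top =>
    rw [EReal.sub_top] at h
    exact absurd h (by simp)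

end Aux3
section Aux4

variable {S : Type*} {𝓐 : Set (Set S)}

lemma maxVal_const [Nonempty S] (hA : IsSetAlg 𝓐) (b : (Set S → ℝ) → EReal) (c : ℝ) :
    maxVal 𝓐 b (fun _ : S => c) = (c : EReal) - ⨅ q ∈ Δset 𝓐, b q := by
  unfold maxVal
  rw [← ereal_biSup_const_sub]
  exact biSup_congr fun q hq => by rw [fint_const hq hA]

lemma minmax_const [Nonempty S] (hA : IsSetAlg 𝓐) {B : Set ((Set S → ℝ) → EReal)}
    (hg : Grounded 𝓐 B) (c : ℝ) :
    minmaxVal 𝓐 B (fun _ : S => c) = (c : EReal) := by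
  unfold minmaxVal
  rw [biInf_congr fun b (_ : b ∈ B) => maxVal_const hA b c, ereal_biInf_const_sub]
  rw [Grounded] at hg
  rw [hg]
  rw [sub_eq_add_neg, neg_zero, add_zero]

variable {V : Type*} [AddCommGroup V] [Module ℝ V]

lemma key_val [Nonempty S] (hA : IsSetAlg 𝓐) {X : Set V} {R : (S → V) → (S → V) → Prop}
    {u : V → ℝ} {B : Set ((Set S → ℝ) → EReal)} (hB : Grounded 𝓐 B)
    (hrepB : MinmaxRep 𝓐 X R u B) {xf : (S → V) → V} (hxf : IsCE 𝓐 X R xf)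
    {f : S → V} (hf : f ∈ Acts 𝓐 X) :
    minmaxVal 𝓐 B (uAct u f) = (u (xf f) : EReal) := by
  obtain ⟨hxfX, hR1, hR2⟩ := hxf f hf
  have hc : (constAct (xf f) : S → V) ∈ Acts 𝓐 X := constAct_mem hA hxfX
  have h1 := (hrepB f hf _ hc).mp hR1
  have h2 := (hrepB _ hc f hf).mp hR2
  have he : uAct u (constAct (xf f) : S → V) = fun _ : S => u (xf f) := rfl
  rw [he, minmax_const hA hB] at h1 h2
  exact le_antisymm h2 h1

end Aux4
section Aux5

variable {S : Type*}

/-- Evaluation map into the product space. -/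
noncomputable def evalMap (𝓐 : Set (Set S)) : (Set S → ℝ) → ({φ : S → ℝ // IsSimpleFn 𝓐 φ} → ℝ) :=
  fun p ψ => fint p ψ.1

/-- Indicator as a simple function. -/
noncomputable def sigma' {𝓐 : Set (Set S)} (hA : IsSetAlg 𝓐) {A : Set S} (hAm : A ∈ 𝓐) :
    {φ : S → ℝ // IsSimpleFn 𝓐 φ} := ⟨chi A, chi_simple hA hAm⟩

/-- The closed set of "finitely additive" functionals. -/
def Fset {𝓐 : Set (Set S)} (hA : IsSetAlg 𝓐) : Set ({φ : S → ℝ // IsSimpleFn 𝓐 φ} → ℝ) :=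
  {L | L (sigma' hA hA.univ_mem) = 1 ∧
       (∀ A : Set S, ∀ hAm : A ∈ 𝓐, 0 ≤ L (sigma' hA hAm)) ∧
       (∀ A : Set S, ∀ hAm : A ∈ 𝓐, ∀ B : Set S, ∀ hBm : B ∈ 𝓐, Disjoint A B →
          L (sigma' hA (hA.union_mem A hAm B hBm)) = L (sigma' hA hAm) + L (sigma' hA hBm)) ∧
       ∀ ψ : {φ : S → ℝ // IsSimpleFn 𝓐 φ},
          L ψ = ∑ t ∈ ψ.2.1.toFinset, t * L (sigma' hA (ψ.2.2 t))}

/-- The compact box. -/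
def Kset (𝓐 : Set (Set S)) : Set ({φ : S → ℝ // IsSimpleFn 𝓐 φ} → ℝ) :=
  Set.pi Set.univ (fun ψ => Set.Icc (-(∑ t ∈ ψ.2.1.toFinset, |t|)) (∑ t ∈ ψ.2.1.toFinset, |t|))

lemma Fset_closed {𝓐 : Set (Set S)} (hA : IsSetAlg 𝓐) : IsClosed (Fset hA) := by
  have h1 : IsClosed {L : {φ : S → ℝ // IsSimpleFn 𝓐 φ} → ℝ | L (sigma' hA hA.univ_mem) = 1} :=
    isClosed_eq (continuous_apply _) continuous_const
  have h2 : IsClosed {L : {φ : S → ℝ // IsSimpleFn 𝓐 φ} → ℝ |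
      ∀ A : Set S, ∀ hAm : A ∈ 𝓐, 0 ≤ L (sigma' hA hAm)} := by
    have : {L : {φ : S → ℝ // IsSimpleFn 𝓐 φ} → ℝ |
        ∀ A : Set S, ∀ hAm : A ∈ 𝓐, 0 ≤ L (sigma' hA hAm)} =
        ⋂ (A : Set S), ⋂ (hAm : A ∈ 𝓐), {L | 0 ≤ L (sigma' hA hAm)} := by
      ext L; simp
    rw [this]
    exact isClosed_iInter fun A => isClosed_iInter fun hAm =>
      isClosed_le continuous_const (continuous_apply _)
  have h3 : IsClosed {L : {φ : S → ℝ // IsSimpleFn 𝓐 φ} → ℝ |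
      ∀ A : Set S, ∀ hAm : A ∈ 𝓐, ∀ B : Set S, ∀ hBm : B ∈ 𝓐, Disjoint A B →
        L (sigma' hA (hA.union_mem A hAm B hBm)) = L (sigma' hA hAm) + L (sigma' hA hBm)} := by
    have : {L : {φ : S → ℝ // IsSimpleFn 𝓐 φ} → ℝ |
        ∀ A : Set S, ∀ hAm : A ∈ 𝓐, ∀ B : Set S, ∀ hBm : B ∈ 𝓐, Disjoint A B →
          L (sigma' hA (hA.union_mem A hAm B hBm)) = L (sigma' hA hAm) + L (sigma' hA hBm)} =
        ⋂ (A : Set S), ⋂ (hAm : A ∈ 𝓐), ⋂ (B : Set S), ⋂ (hBm : B ∈ 𝓐), ⋂ (_ : Disjoint A B),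
          {L | L (sigma' hA (hA.union_mem A hAm B hBm)) =
            L (sigma' hA hAm) + L (sigma' hA hBm)} := by
      ext L; simp
    rw [this]
    exact isClosed_iInter fun A => isClosed_iInter fun hAm => isClosed_iInter fun B =>
      isClosed_iInter fun hBm => isClosed_iInter fun _ =>
        isClosed_eq (continuous_apply _) (((continuous_apply (sigma' hA hAm))).add (continuous_apply (sigma' hA hBm)))
  have h4 : IsClosed {L : {φ : S → ℝ // IsSimpleFn 𝓐 φ} → ℝ |
      ∀ ψ : {φ : S → ℝ // IsSimpleFn 𝓐 φ},
        L ψ = ∑ t ∈ ψ.2.1.toFinset, t * L (sigma' hA (ψ.2.2 t))} := by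
    have : {L : {φ : S → ℝ // IsSimpleFn 𝓐 φ} → ℝ |
        ∀ ψ : {φ : S → ℝ // IsSimpleFn 𝓐 φ},
          L ψ = ∑ t ∈ ψ.2.1.toFinset, t * L (sigma' hA (ψ.2.2 t))} =
        ⋂ (ψ : {φ : S → ℝ // IsSimpleFn 𝓐 φ}),
          {L | L ψ = ∑ t ∈ ψ.2.1.toFinset, t * L (sigma' hA (ψ.2.2 t))} := by
      ext L; simp
    rw [this]
    refine isClosed_iInter fun ψ => isClosed_eq (continuous_apply _) ?_
    exact continuous_finset_sum _ fun t _ => continuous_const.mul (continuous_apply (sigma' hA (ψ.2.2 t)))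
  have : Fset hA = _ ∩ (_ ∩ (_ ∩ _)) := rfl
  exact (h1.inter (h2.inter (h3.inter h4)))

lemma evalMap_image {𝓐 : Set (Set S)} (hA : IsSetAlg 𝓐) :
    evalMap 𝓐 '' Δset 𝓐 = Fset hA ∩ Kset 𝓐 := by
  classical
  apply Set.Subset.antisymm
  · rintro _ ⟨p, hp, rfl⟩
    have hp0 : p ∅ = 0 := Delta.empty_eq_zero hp hA
    constructor
    · refine ⟨?_, ?_, ?_, ?_⟩
      · show fint p (chi Set.univ) = 1
        rw [fint_chi hp0, hp.1]
      · intro A hAm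
        show 0 ≤ fint p (chi A)
        rw [fint_chi hp0]; exact hp.2.1 A hAm
      · intro A hAm B hBm hd
        show fint p (chi (A ∪ B)) = fint p (chi A) + fint p (chi B)
        rw [fint_chi hp0, fint_chi hp0, fint_chi hp0]
        exact hp.2.2.1 A hAm B hBm hd
      · intro ψ
        show fint p ψ.1 = ∑ t ∈ ψ.2.1.toFinset, t * fint p (chi (ψ.1 ⁻¹' {t}))
        rw [fint, dif_pos ψ.2.1]
        exact Finset.sum_congr rfl fun t _ => by rw [fint_chi hp0]
    · intro ψ _
      show fint p ψ.1 ∈ Set.Icc _ _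
      have hle : ∀ t : ℝ, |p (ψ.1 ⁻¹' {t})| ≤ 1 := by
        intro t
        rw [abs_le]
        exact ⟨by linarith [hp.2.1 _ (ψ.2.2 t)], Delta.le_one hp hA (ψ.2.2 t)⟩
      have habs : |fint p ψ.1| ≤ ∑ t ∈ ψ.2.1.toFinset, |t| := by
        rw [fint, dif_pos ψ.2.1]
        refine le_trans (Finset.abs_sum_le_sum_abs _ _) ?_
        refine Finset.sum_le_sum fun t _ => ?_
        rw [abs_mul]
        calc |t| * |p (ψ.1 ⁻¹' {t})| ≤ |t| * 1 :=
              mul_le_mul_of_nonneg_left (hle t) (abs_nonneg t)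
          _ = |t| := mul_one _
      exact abs_le.mp habs
  · rintro L ⟨⟨hL1, hL2, hL3, hL4⟩, -⟩
    set p : Set S → ℝ := fun A => if h : A ∈ 𝓐 then L (sigma' hA h) else 0 with hpdef
    have hpA : ∀ {A : Set S} (h : A ∈ 𝓐), p A = L (sigma' hA h) := by
      intro A h; simp only [hpdef, dif_pos h]
    refine ⟨p, ⟨?_, ?_, ?_, ?_⟩, ?_⟩
    · rw [hpA hA.univ_mem]; exact hL1
    · intro A hAm; rw [hpA hAm]; exact hL2 A hAm
    · intro A hAm B hBm hd
      rw [hpA (hA.union_mem A hAm B hBm), hpA hAm, hpA hBm]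
      exact hL3 A hAm B hBm hd
    · intro A hAm; simp only [hpdef, dif_neg hAm]
    · funext ψ
      show fint p ψ.1 = L ψ
      rw [fint, dif_pos ψ.2.1, hL4 ψ]
      exact Finset.sum_congr rfl fun t _ => by rw [hpA (ψ.2.2 t)]

lemma delta_isCompact {𝓐 : Set (Set S)} (hA : IsSetAlg 𝓐) :
    @IsCompact _ (weakStar 𝓐) (Δset 𝓐) := by
  letI : TopologicalSpace (Set S → ℝ) := weakStar 𝓐
  have hind : Topology.IsInducing (evalMap 𝓐) := ⟨rfl⟩
  rw [hind.isCompact_iff, evalMap_image hA]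
  exact (isCompact_univ_pi fun ψ => isCompact_Icc).inter_left (Fset_closed hA)

lemma fint_continuous {𝓐 : Set (Set S)} {φ : S → ℝ} (hφ : IsSimpleFn 𝓐 φ) :
    @Continuous _ _ (weakStar 𝓐) _ (fun p : Set S → ℝ => fint p φ) := by
  letI : TopologicalSpace (Set S → ℝ) := weakStar 𝓐
  have hind : Topology.IsInducing (evalMap 𝓐) := ⟨rfl⟩
  have : (fun p : Set S → ℝ => fint p φ) =
      (fun L : {ψ : S → ℝ // IsSimpleFn 𝓐 ψ} → ℝ => L ⟨φ, hφ⟩) ∘ evalMap 𝓐 := rfl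
  rw [this]
  exact (continuous_apply _).comp hind.continuous

end Aux5
section Aux6

lemma usc_max {α : Type*} [TopologicalSpace α] {s : Set α} (hs : IsCompact s) (hne : s.Nonempty)
    {g : α → EReal} (hg : ∀ x ∈ s, ∀ r : EReal, g x < r → ∀ᶠ y in nhdsWithin x s, g y < r) :
    ∃ x ∈ s, ∀ y ∈ s, g y ≤ g x := by
  classical
  by_contra hcon
  push_neg at hcon
  choose! c hc1 hc2 using hcon
  have hV : ∀ x ∈ s, ∃ V ∈ nhds x, ∀ y ∈ V ∩ s, g y < g (c x) := by
    intro x hx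
    have hU : {y | g y < g (c x)} ∈ nhdsWithin x s := hg x hx _ (hc2 x hx)
    obtain ⟨u, hu1, hu2⟩ := mem_nhdsWithin_iff_exists_mem_nhds_inter.mp hU
    exact ⟨u, hu1, fun y hy => hu2 hy⟩
  choose! V hV1 hV2 using hV
  obtain ⟨t, hts, hcover⟩ := hs.elim_nhds_subcover V (fun x hx => hV1 x hx)
  have htne : t.Nonempty := by
    obtain ⟨x0, hx0⟩ := hne
    obtain ⟨x1, hx1, -⟩ := Set.mem_iUnion₂.mp (hcover hx0)
    exact ⟨x1, hx1⟩
  obtain ⟨xs, hxst, hmax⟩ := t.exists_max_image (fun x => g (c x)) htne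
  have hy : c xs ∈ s := hc1 xs (hts xs hxst)
  obtain ⟨x', hx't, hx'V⟩ := Set.mem_iUnion₂.mp (hcover hy)
  have hlt := hV2 x' (hts x' hx't) (c xs) ⟨hx'V, hy⟩
  exact absurd (lt_of_lt_of_le hlt (hmax x' hx't)) (lt_irrefl _)

variable {S : Type*} {𝓐 : Set (Set S)}

lemma g_usc (hA : IsSetAlg 𝓐) {b : (Set S → ℝ) → EReal} (hb : b ∈ Cscr 𝓐) {φ : S → ℝ}
    (hφ : IsSimpleFn 𝓐 φ) :
    ∀ x ∈ Δset 𝓐, ∀ r : EReal, ((fint x φ : EReal) - b x) < r →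
      ∀ᶠ y in @nhdsWithin _ (weakStar 𝓐) x (Δset 𝓐), ((fint y φ : EReal) - b y) < r := by
  letI : TopologicalSpace (Set S → ℝ) := weakStar 𝓐
  intro x hx r hr
  set d : ℝ := fint x φ with hd
  obtain ⟨r', hr1', hr2'⟩ := EReal.exists_between_coe_real hr
  have hbx : ((d - r' : ℝ) : EReal) < b x := by
    have hbot : (⊥ : EReal) < b x := hb.1 x hx
    revert hbot hr1'
    induction b x using EReal.rec with
    | bot =>
      intro h1 _
      rw [EReal.coe_sub_bot] at h1
      exact absurd h1 (by simp)
    | coe y =>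
      intro h2 _
      rw [← EReal.coe_sub, EReal.coe_lt_coe_iff] at h2
      rw [EReal.coe_lt_coe_iff]; linarith
    | top => intro _ _; exact EReal.coe_lt_top _
  obtain ⟨m, hm1, hm2⟩ := EReal.exists_between_coe_real hbx
  rw [EReal.coe_lt_coe_iff] at hm1
  have hdM : d < r' + m := by linarith
  have ev1 : ∀ᶠ y in nhdsWithin x (Δset 𝓐), (m : EReal) < b y := hb.2.1 x hx (m : EReal) hm2
  have hc : ContinuousWithinAt (fun q : Set S → ℝ => fint q φ) (Δset 𝓐) x :=
    (fint_continuous hφ).continuousWithinAt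
  have ev2 : ∀ᶠ y in nhdsWithin x (Δset 𝓐), fint y φ < r' + m :=
    hc.eventually_lt_const hdM
  filter_upwards [ev1, ev2] with y hy1 hy2
  have h1 : (fint y φ : EReal) - b y ≤ ((r' + m : ℝ) : EReal) - (m : EReal) := by
    rw [sub_eq_add_neg, sub_eq_add_neg]
    exact add_le_add (EReal.coe_le_coe_iff.mpr hy2.le) (EReal.neg_le_neg_iff.mpr hy1.le)
  rw [← EReal.coe_sub] at h1
  have hrm : (r' + m - m : ℝ) = r' := by ring
  rw [hrm] at h1
  exact lt_of_le_of_lt h1 hr2'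

lemma maxVal_attained [Nonempty S] (hA : IsSetAlg 𝓐) {b : (Set S → ℝ) → EReal}
    (hb : b ∈ Cscr 𝓐) {φ : S → ℝ} (hφ : IsSimpleFn 𝓐 φ) :
    ∃ q ∈ Δset 𝓐, maxVal 𝓐 b φ = (fint q φ : EReal) - b q := by
  letI : TopologicalSpace (Set S → ℝ) := weakStar 𝓐
  obtain ⟨q, hq, hmax⟩ := usc_max (delta_isCompact hA) (Δset_nonempty hA) (g_usc hA hb hφ)
  refine ⟨q, hq, le_antisymm (iSup₂_le fun q' hq' => hmax q' hq') ?_⟩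
  exact le_iSup₂ (f := fun q (_ : q ∈ Δset 𝓐) => (fint q φ : EReal) - b q) q hq

end Aux6
theorem stmt3 {S V : Type*} [Nonempty S] [AddCommGroup V] [Module ℝ V]
    (𝓐 : Set (Set S)) (hA : IsSetAlg 𝓐)
    (X : Set V) (hX : X.Nonempty) (hXc : Convex ℝ X)
    (R : (S → V) → (S → V) → Prop) (hpref : NiveloidalPref 𝓐 X R)
    (u : V → ℝ) (hu : IsNonconstAffine X u) (h0 : (0 : ℝ) ∈ interior (u '' X))
    (hrep : ∃ B ⊆ Cscr 𝓐, Grounded 𝓐 B ∧ MinmaxAttained 𝓐 X u B ∧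
      MinmaxRep 𝓐 X R u B)
    (xf : (S → V) → V) (hxf : IsCE 𝓐 X R xf) :
    Grounded 𝓐 (BstarOf 𝓐 X u xf) ∧
    (∀ f ∈ Acts 𝓐 X,
      minmaxVal 𝓐 (BstarOf 𝓐 X u xf) (uAct u f) = (u (xf f) : EReal)) ∧
    MinmaxAttained 𝓐 X u (BstarOf 𝓐 X u xf) ∧
    MinmaxRep 𝓐 X R u (BstarOf 𝓐 X u xf) ∧
    ∀ B ⊆ Cscr 𝓐, Grounded 𝓐 B → MinmaxAttained 𝓐 X u B → MinmaxRep 𝓐 X R u B →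
      B ⊆ BstarOf 𝓐 X u xf := by
  obtain ⟨B₀, hB₀sub, hB₀g, hB₀att, hB₀rep⟩ := hrep
  have hmaximal : ∀ B ⊆ Cscr 𝓐, Grounded 𝓐 B → MinmaxAttained 𝓐 X u B →
      MinmaxRep 𝓐 X R u B → B ⊆ BstarOf 𝓐 X u xf := by
    intro B hBsub hBg _ hBrep b hbB
    refine ⟨hBsub hbB, fun f hf => ?_⟩
    rw [← key_val hA hBg hBrep hxf hf]
    exact iInf₂_le (f := fun b (_ : b ∈ B) => maxVal 𝓐 b (uAct u f)) b hbB
  have hB₀star : B₀ ⊆ BstarOf 𝓐 X u xf := hmaximal B₀ hB₀sub hB₀g hB₀att hB₀rep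
  have hbval : ∀ f ∈ Acts 𝓐 X,
      minmaxVal 𝓐 (BstarOf 𝓐 X u xf) (uAct u f) = (u (xf f) : EReal) := by
    intro f hf
    refine le_antisymm ?_ (le_iInf₂ fun b hb => hb.2 f hf)
    calc minmaxVal 𝓐 (BstarOf 𝓐 X u xf) (uAct u f)
        ≤ minmaxVal 𝓐 B₀ (uAct u f) := iInf_le_iInf_of_subset hB₀star
      _ = (u (xf f) : EReal) := key_val hA hB₀g hB₀rep hxf hf
  have hstar_g : Grounded 𝓐 (BstarOf 𝓐 X u xf) := by
    rw [Grounded]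
    refine le_antisymm ?_ ?_
    · refine iSup₂_le fun b hb => ?_
      obtain ⟨x0, hx0⟩ := hX
      have hf0 : (constAct x0 : S → V) ∈ Acts 𝓐 X := constAct_mem hA hx0
      have h1 := hb.2 _ hf0
      have h2 : (u (xf (constAct x0 : S → V)) : EReal) = (u x0 : EReal) := by
        rw [← key_val hA hB₀g hB₀rep hxf hf0]
        have he : uAct u (constAct x0 : S → V) = fun _ : S => u x0 := rfl
        rw [he, minmax_const hA hB₀g]
      rw [h2] at h1
      have h3 : maxVal 𝓐 b (uAct u (constAct x0 : S → V)) =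
          (u x0 : EReal) - ⨅ q ∈ Δset 𝓐, b q := maxVal_const hA b (u x0)
      rw [h3] at h1
      exact ereal_le_sub_self h1
    · rw [Grounded] at hB₀g
      rw [← hB₀g]
      exact iSup_le_iSup_of_subset hB₀star
  have hatt : MinmaxAttained 𝓐 X u (BstarOf 𝓐 X u xf) := by
    intro f hf
    constructor
    · intro b hb
      exact maxVal_attained hA hb.1 (uAct_simple hA hf)
    · obtain ⟨b₀, hb₀B, hb₀eq⟩ := (hB₀att f hf).2
      refine ⟨b₀, hB₀star hb₀B, ?_⟩
      rw [hbval f hf, ← key_val hA hB₀g hB₀rep hxf hf, hb₀eq]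
  have hrep' : MinmaxRep 𝓐 X R u (BstarOf 𝓐 X u xf) := by
    intro f hf g hg
    rw [hB₀rep f hf g hg, key_val hA hB₀g hB₀rep hxf hf, key_val hA hB₀g hB₀rep hxf hg,
      hbval f hf, hbval g hg]
  exact ⟨hstar_g, hbval, hatt, hrep', hmaximal⟩

end Paper
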